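/- (Estimate of the big-jump part of the generator.) For every x with |x| > 1: ∫_{|x|^λ ≤ |u| < |x|} (V(x+u) − V(x) − ∇V(x)·u) ν(x,du) ≤ (p/2)·|x|^{p−1}·∫_{|x|^λ ≤ |u| < |x|} |u| ν(x,du) = φ^big(x). -/

import Mathlib

open MeasureTheory Filter Bornology
open scoped InnerProductSpace

noncomputable section

/-- `ℝ^d`, the `d`-dimensional Euclidean space. -/
abbrev Euc (d : ℕ) := EuclideanSpace ℝ (Fin d)

variable {d : ℕ}

/-- The generator `ℒV(x) = ∇V(x)·ℓ(x) + ∫ (V(x+u) − V(x) − ∇V(x)·u 1_{|u|<1}) ν(x,du)`. -/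
noncomputable def genL (V : Euc d → ℝ) (l : Euc d → Euc d)
    (ν : Euc d → Measure (Euc d)) (x : Euc d) : ℝ :=
  ⟪gradient V x, l x⟫_ℝ +
    ∫ u, (V (x + u) - V x - if ‖u‖ < 1 then ⟪gradient V x, u⟫_ℝ else 0) ∂(ν x)

/-- The drift part `ℒ^drift V(x) = ∇V(x)·(ℓ(x) + ∫_{1<|u|<|x|} u ν(x,du))`. -/
noncomputable def genLdrift (V : Euc d → ℝ) (l : Euc d → Euc d)
    (ν : Euc d → Measure (Euc d)) (x : Euc d) : ℝ :=
  ⟪gradient V x, l x + ∫ u in {u : Euc d | 1 < ‖u‖ ∧ ‖u‖ < ‖x‖}, u ∂(ν x)⟫_ℝ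

/-- `φ^drift(x) = |x|^{p−1} max(|ℓ(x)|, ∫_{1<|u|<|x|} |u| ν(x,du))`. -/
noncomputable def phiDrift (p : ℝ) (l : Euc d → Euc d)
    (ν : Euc d → Measure (Euc d)) (x : Euc d) : ℝ :=
  ‖x‖ ^ (p - 1) * max ‖l x‖ (∫ u in {u : Euc d | 1 < ‖u‖ ∧ ‖u‖ < ‖x‖}, ‖u‖ ∂(ν x))

/-- `φ^ball₊(x) = |x|^{p−2} ∫_{|u|<|x|^λ} |u|² ν(x,du)`. -/
noncomputable def phiBallPlus (p lam : ℝ)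
    (ν : Euc d → Measure (Euc d)) (x : Euc d) : ℝ :=
  ‖x‖ ^ (p - 2) * ∫ u in {u : Euc d | ‖u‖ < ‖x‖ ^ lam}, ‖u‖ ^ 2 ∂(ν x)

/-- `φ^ball₋(x) = |x|^{p−2} ∫_{|u|<|x|^λ} |u|² γ_{x,u}² ν(x,du)`, with
`γ_{x,u} = (x·u)/(|x||u|)`. -/
noncomputable def phiBallMinus (p lam : ℝ)
    (ν : Euc d → Measure (Euc d)) (x : Euc d) : ℝ :=
  ‖x‖ ^ (p - 2) * ∫ u in {u : Euc d | ‖u‖ < ‖x‖ ^ lam},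
      ‖u‖ ^ 2 * (⟪x, u⟫_ℝ / (‖x‖ * ‖u‖)) ^ 2 ∂(ν x)

/-- `φ^big(x) = (p/2)|x|^{p−1} ∫_{|x|^λ≤|u|<|x|} |u| ν(x,du)`. -/
noncomputable def phiBig (p lam : ℝ)
    (ν : Euc d → Measure (Euc d)) (x : Euc d) : ℝ :=
  p / 2 * ‖x‖ ^ (p - 1) * ∫ u in {u : Euc d | ‖x‖ ^ lam ≤ ‖u‖ ∧ ‖u‖ < ‖x‖}, ‖u‖ ∂(ν x)

/-- `φ^large(x) = ∫_{|u|≥|x|} |u|^p ν(x,du)`. -/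
noncomputable def phiLarge (p : ℝ)
    (ν : Euc d → Measure (Euc d)) (x : Euc d) : ℝ :=
  ∫ u in {u : Euc d | ‖x‖ ≤ ‖u‖}, ‖u‖ ^ p ∂(ν x)

/-- Auxiliary scalar inequality:
`b^p − a^p − p a^{p−2} i ≤ (p/2) a^{p−1} ν` when `b² = a² + 2i + ν²`, `0 ≤ ν < a`, `1 < a`. -/
private lemma key_scalar (p : ℝ) (hp0 : 0 < p) (hp1 : p < 1) (a b i nu : ℝ)
    (ha : 1 < a) (hb : 0 ≤ b) (hnu : 0 ≤ nu) (hnua : nu < a)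
    (hb2 : b ^ 2 = a ^ 2 + 2 * i + nu ^ 2) :
    b ^ p - a ^ p - p * a ^ (p-2) * i ≤ p / 2 * a ^ (p-1) * nu := by
  have ha0 : (0:ℝ) < a := lt_trans one_pos ha
  set A : ℝ := a ^ (p - 2) with hA
  have hApos : 0 < A := Real.rpow_pos_of_pos ha0 _
  have hap : a ^ p = A * a ^ 2 := by
    rw [hA, sq, ← mul_assoc, ← Real.rpow_add_one ha0.ne', ← Real.rpow_add_one ha0.ne']
    congr 1; ring
  have hap1 : a ^ (p - 1) = A * a := by
    rw [hA, ← Real.rpow_add_one ha0.ne']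
    congr 1; ring
  have hs : (-1:ℝ) ≤ b / a - 1 := by
    have : 0 ≤ b / a := div_nonneg hb ha0.le
    linarith
  have hbern := rpow_one_add_le_one_add_mul_self hs hp0.le hp1.le
  have hba : (1 : ℝ) + (b / a - 1) = b / a := by ring
  rw [hba] at hbern
  have hbp : b ^ p ≤ a ^ p * (1 + p * (b / a - 1)) := by
    have h1 : b ^ p = a ^ p * (b / a) ^ p := by
      rw [← Real.mul_rpow ha0.le (div_nonneg hb ha0.le), mul_div_cancel₀ _ ha0.ne']
    rw [h1]
    exact mul_le_mul_of_nonneg_left hbern (Real.rpow_nonneg ha0.le p)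
  have e1 : a ^ p * (1 + p * (b / a - 1)) = A * a ^ 2 + p * A * (a * (b - a)) := by
    rw [hap]; field_simp
  rw [e1] at hbp
  have h3 : a * (b - a) ≤ i + nu ^ 2 / 2 := by nlinarith [sq_nonneg (a - b)]
  have h4 : p * A * (a * (b - a)) ≤ p * A * (i + nu ^ 2 / 2) :=
    mul_le_mul_of_nonneg_left h3 (by positivity)
  have h5 : nu ^ 2 ≤ a * nu := by nlinarith
  have h6 : p * A * (i + nu ^ 2 / 2) ≤ p * A * i + p / 2 * (A * a) * nu := by
    nlinarith [mul_le_mul_of_nonneg_left h5 (by positivity : (0:ℝ) ≤ p * A / 2)]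
  rw [hap, hap1]
  linarith

/-- The gradient of `y ↦ 1 + ⟪y,y⟫^{p/2}` at `x ≠ 0`. -/
private lemma gradAux {d : ℕ} (p : ℝ) (x : Euc d) (hx : 1 < ‖x‖) :
    HasGradientAt (fun y : Euc d => 1 + ⟪y, y⟫_ℝ ^ (p/2)) ((p * ‖x‖ ^ (p-2)) • x) x := by
  have hxn : (0:ℝ) < ‖x‖ := lt_trans one_pos hx
  have hx0 : (0:ℝ) < ⟪x,x⟫_ℝ := by
    rw [real_inner_self_eq_norm_sq]; positivity
  have key : ⟪x,x⟫_ℝ ^ (p/2 - 1) = ‖x‖ ^ (p - 2) := by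
    rw [real_inner_self_eq_norm_sq, ← Real.rpow_natCast ‖x‖ 2,
      ← Real.rpow_mul (norm_nonneg x)]
    congr 1; push_cast; ring
  have hinner : HasFDerivAt (fun y : Euc d => ⟪y,y⟫_ℝ)
      ((fderivInnerCLM ℝ ((x : Euc d), (x : Euc d))).comp
        ((ContinuousLinearMap.id ℝ (Euc d)).prod (ContinuousLinearMap.id ℝ (Euc d)))) x :=
    (hasFDerivAt_id x).inner ℝ (hasFDerivAt_id x)
  have hr : HasDerivAt (fun t:ℝ => t ^ (p/2)) (p/2 * ⟪x,x⟫_ℝ ^ (p/2 - 1)) ⟪x,x⟫_ℝ :=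
    Real.hasDerivAt_rpow_const (Or.inl hx0.ne')
  have hcomp := (hr.comp_hasFDerivAt (f := fun y : Euc d => ⟪y,y⟫_ℝ) x hinner).const_add 1
  rw [hasGradientAt_iff_hasFDerivAt]
  refine hcomp.congr_fderiv ?_
  ext u
  simp only [InnerProductSpace.toDual_apply_apply, real_inner_smul_left,
    ContinuousLinearMap.coe_smul', Pi.smul_apply, ContinuousLinearMap.coe_comp',
    Function.comp_apply, ContinuousLinearMap.prod_apply, ContinuousLinearMap.coe_id', id_eq,
    fderivInnerCLM_apply, smul_eq_mul]
  rw [real_inner_comm u x, key]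
  ring

/-- estimate of the big-jump part of the generator.
For every `|x| > 1`:
`∫_{|x|^λ ≤ |u| < |x|} (V(x+u) − V(x) − ∇V(x)·u) ν(x,du)
  ≤ (p/2)|x|^{p−1} ∫_{|x|^λ ≤ |u| < |x|} |u| ν(x,du) = φ^big(x)`. -/
theorem statement11
    (d : ℕ) (hd : 1 ≤ d) (p lam : ℝ)
    (hp : p ∈ Set.Ioo (0 : ℝ) 1) (hlam : lam ∈ Set.Ioo (0 : ℝ) 1)
    (V : Euc d → ℝ) (ν : Euc d → Measure (Euc d))
    (hV : ContDiff ℝ 2 V) (hV1 : ∀ x, 1 ≤ V x)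
    (hVeq : ∀ x : Euc d, 1 < ‖x‖ → V x = 1 + ‖x‖ ^ p)
    (hVle : ∀ x : Euc d, V x ≤ 1 + ‖x‖ ^ p)
    (hν0 : ∀ x : Euc d, ν x {0} = 0)
    (hνsq : ∀ x : Euc d, ∫⁻ u, ENNReal.ofReal (min 1 (‖u‖ ^ 2)) ∂(ν x) < ⊤)
    (hIntAnn : ∀ x : Euc d, 1 < ‖x‖ →
      IntegrableOn (fun u => V (x + u) - V x - ⟪gradient V x, u⟫_ℝ)
        {u : Euc d | ‖x‖ ^ lam ≤ ‖u‖ ∧ ‖u‖ < ‖x‖} (ν x))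
    (x : Euc d) (hx : 1 < ‖x‖) :
    (∫ u in {u : Euc d | ‖x‖ ^ lam ≤ ‖u‖ ∧ ‖u‖ < ‖x‖},
        (V (x + u) - V x - ⟪gradient V x, u⟫_ℝ) ∂(ν x))
      ≤ p / 2 * ‖x‖ ^ (p - 1)
          * ∫ u in {u : Euc d | ‖x‖ ^ lam ≤ ‖u‖ ∧ ‖u‖ < ‖x‖}, ‖u‖ ∂(ν x) ∧
    p / 2 * ‖x‖ ^ (p - 1)
        * (∫ u in {u : Euc d | ‖x‖ ^ lam ≤ ‖u‖ ∧ ‖u‖ < ‖x‖}, ‖u‖ ∂(ν x))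
      = phiBig p lam ν x := by
  obtain ⟨hp0, hp1⟩ := hp
  have hxn : (0:ℝ) < ‖x‖ := lt_trans one_pos hx
  refine ⟨?_, rfl⟩
  -- gradient of V at x
  have hgrad : gradient V x = (p * ‖x‖ ^ (p-2)) • x := by
    have hgV : V =ᶠ[nhds x] (fun y : Euc d => 1 + ⟪y, y⟫_ℝ ^ (p/2)) := by
      have hopen : IsOpen {y : Euc d | 1 < ‖y‖} := isOpen_lt continuous_const continuous_norm
      filter_upwards [hopen.mem_nhds hx] with y hy
      rw [hVeq y hy, real_inner_self_eq_norm_sq, ← Real.rpow_natCast ‖y‖ 2,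
        ← Real.rpow_mul (norm_nonneg y)]
      congr 2; push_cast; ring
    rw [hgV.gradient_eq, (gradAux p x hx).gradient]
  -- pointwise inequality on the annulus
  set S : Set (Euc d) := {u : Euc d | ‖x‖ ^ lam ≤ ‖u‖ ∧ ‖u‖ < ‖x‖} with hS
  have hSm : MeasurableSet S :=
    (measurableSet_le measurable_const measurable_norm).inter
      (measurableSet_lt measurable_norm measurable_const)
  have hpt : ∀ u ∈ S, V (x + u) - V x - ⟪gradient V x, u⟫_ℝ
      ≤ p / 2 * ‖x‖ ^ (p - 1) * ‖u‖ := by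
    intro u hu
    have hu2 : ‖u‖ < ‖x‖ := hu.2
    have h1 : V (x + u) ≤ 1 + ‖x + u‖ ^ p := hVle (x + u)
    have h2 : V x = 1 + ‖x‖ ^ p := hVeq x hx
    have h3 : ⟪gradient V x, u⟫_ℝ = p * ‖x‖ ^ (p-2) * ⟪x, u⟫_ℝ := by
      rw [hgrad, real_inner_smul_left]
    have hb2 : ‖x + u‖ ^ 2 = ‖x‖ ^ 2 + 2 * ⟪x, u⟫_ℝ + ‖u‖ ^ 2 := norm_add_sq_real x u
    have := key_scalar p hp0 hp1 ‖x‖ ‖x + u‖ ⟪x, u⟫_ℝ ‖u‖ hx (norm_nonneg _)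
      (norm_nonneg _) hu2 hb2
    rw [h2, h3]
    linarith
  -- the annulus has finite measure
  have h1lam : (1:ℝ) ≤ ‖x‖ ^ lam := Real.one_le_rpow hx.le hlam.1.le
  have hfin : ν x S < ⊤ := by
    have hle : ν x S ≤ ∫⁻ u, ENNReal.ofReal (min 1 (‖u‖ ^ 2)) ∂(ν x) := by
      rw [← setLIntegral_one S]
      refine le_trans (setLIntegral_mono' hSm fun u hu => ?_)
        (setLIntegral_le_lintegral S _)
      have h1u : (1:ℝ) ≤ ‖u‖ := le_trans h1lam hu.1
      have : min 1 (‖u‖ ^ 2) = 1 := min_eq_left (by nlinarith)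
      rw [this]
      simp
    exact lt_of_le_of_lt hle (hνsq x)
  -- integrability of the dominating function
  have hgint : IntegrableOn (fun u : Euc d => p / 2 * ‖x‖ ^ (p - 1) * ‖u‖) S (ν x) := by
    apply Integrable.const_mul
    refine Measure.integrableOn_of_bounded hfin.ne
      measurable_norm.aestronglyMeasurable (M := ‖x‖) ?_
    refine (ae_restrict_iff' hSm).2 (ae_of_all _ fun u hu => ?_)
    rw [Real.norm_of_nonneg (norm_nonneg u)]
    exact hu.2.le
  calc (∫ u in S, (V (x + u) - V x - ⟪gradient V x, u⟫_ℝ) ∂(ν x))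
      ≤ ∫ u in S, p / 2 * ‖x‖ ^ (p - 1) * ‖u‖ ∂(ν x) :=
        setIntegral_mono_on (hIntAnn x hx) hgint hSm hpt
    _ = p / 2 * ‖x‖ ^ (p - 1) * ∫ u in S, ‖u‖ ∂(ν x) := integral_const_mul _ _
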